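/- Among all divisor methods, Adams' method (f(t) = t for all t) is the only one satisfying weighted envy-freeness up to one item (WEF1): a divisor method with function f produces a WEF1 allocation for every instance (every number of agents and items, weights, and additive utilities) if and only if f(t) = t for all t ∈ ℤ≥0. -/

import Mathlib

open Finset

/-- The favorite item of an agent with item-utility function `u` among a remaining
set `R` of items: a highest-valued item, ties broken in favor of the lower-numbered item. -/
noncomputable def favorite {m : ℕ} (u : Fin m → ℝ) (R : Finset (Fin m)) : Option (Fin m) :=
  if h : (R.filter fun j => ∀ j' ∈ R, u j' ≤ u j).Nonempty then
    some ((R.filter fun j => ∀ j' ∈ R, u j' ≤ u j).min' h)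
  else none

/-- One step of the picking process: agent `a` picks her favorite remaining item. -/
noncomputable def pickStep {n m : ℕ} (u : Fin n → Fin m → ℝ)
    (st : Finset (Fin m) × (Fin n → Finset (Fin m))) (a : Fin n) :
    Finset (Fin m) × (Fin n → Finset (Fin m)) :=
  match favorite (u a) st.1 with
  | none => st
  | some j => (st.1.erase j, Function.update st.2 a (insert j (st.2 a)))

/-- The allocation produced by letting agents pick their favorite remaining items
in the order given by the picking sequence `π`. -/
noncomputable def allocate {n m : ℕ} (u : Fin n → Fin m → ℝ) (π : List (Fin n)) :
    Fin n → Finset (Fin m) :=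
  (π.foldl (pickStep u) (Finset.univ, fun _ => ∅)).2

/-- Weighted envy-freeness up to one item. -/
def isWEF1 {n m : ℕ} (w : Fin n → ℝ) (u : Fin n → Fin m → ℝ)
    (M : Fin n → Finset (Fin m)) : Prop :=
  ∀ i j : Fin n, ∃ B ⊆ M j, B.card ≤ 1 ∧
    (∑ x ∈ M j \ B, u i x) / w j ≤ (∑ x ∈ M i, u i x) / w i

/-- A divisor method is given by a strictly increasing `f : ℕ → ℝ` with `t ≤ f t ≤ t + 1`. -/
def IsDivisorFn (f : ℕ → ℝ) : Prop :=
  StrictMono f ∧ ∀ t : ℕ, (t : ℝ) ≤ f t ∧ f t ≤ t + 1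

/-- `π` is the picking sequence induced by the divisor method with function `f` and
weights `w`: each pick goes to an agent minimizing `f t_i / w_i` (where `t_i` is the
number of picks agent `i` has received so far), ties broken toward lower-numbered agents. -/
def IsDivisorSeq {n : ℕ} (f : ℕ → ℝ) (w : Fin n → ℝ) (π : List (Fin n)) : Prop :=
  ∀ (k : ℕ) (hk : k < π.length) (i : Fin n),
    f ((π.take k).count (π.get ⟨k, hk⟩)) / w (π.get ⟨k, hk⟩) ≤
      f ((π.take k).count i) / w i ∧
    (i < π.get ⟨k, hk⟩ →
      f ((π.take k).count (π.get ⟨k, hk⟩)) / w (π.get ⟨k, hk⟩) <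
        f ((π.take k).count i) / w i)

set_option linter.unusedSectionVars false
set_option linter.unusedVariables false

namespace AD

lemma favorite_spec {m : ℕ} (u : Fin m → ℝ) (R : Finset (Fin m)) (hR : R.Nonempty) :
    ∃ x ∈ R, favorite u R = some x ∧ ∀ y ∈ R, u y ≤ u x := by
  obtain ⟨b, hb, hmax⟩ := R.exists_max_image u hR
  have hne : (R.filter fun j => ∀ j' ∈ R, u j' ≤ u j).Nonempty :=
    ⟨b, mem_filter.2 ⟨hb, hmax⟩⟩
  have hmem := Finset.min'_mem _ hne
  rw [mem_filter] at hmem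
  exact ⟨_, hmem.1, by rw [favorite, dif_pos hne], hmem.2⟩

variable {n m : ℕ} (u : Fin n → Fin m → ℝ) (π : List (Fin n)) (d : Fin n) (d' : Fin m)

/-- state after `k` picks -/
noncomputable def st (k : ℕ) : Finset (Fin m) × (Fin n → Finset (Fin m)) :=
  (π.take k).foldl (pickStep u) ((Finset.univ : Finset (Fin m)), fun _ => (∅ : Finset (Fin m)))

/-- item picked at step `k` -/
noncomputable def pk (k : ℕ) : Fin m := (favorite (u (π.getD k d)) (st u π k).1).getD d'

lemma st_zero : st u π 0 = (Finset.univ, fun _ => ∅) := rfl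

lemma st_succ {k : ℕ} (hk : k < π.length) :
    st u π (k+1) = pickStep u (st u π k) (π.getD k d) := by
  unfold st
  rw [List.take_succ, List.getElem?_eq_getElem hk, List.getD_eq_getElem π d hk,
    Option.toList_some, List.foldl_append, List.foldl_cons, List.foldl_nil]

lemma st_succ_ge {k : ℕ} (hk : π.length ≤ k) : st u π (k+1) = st u π k := by
  unfold st
  rw [List.take_of_length_le hk, List.take_of_length_le (le_trans hk (Nat.le_succ k))]

variable (hπ : π.length = m)

include hπ d d' in
lemma pool_card : ∀ k ≤ m, (st u π k).1.card = m - k := by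
  intro k
  induction k with
  | zero => intro _; simp [st_zero]
  | succ k ih =>
    intro hk
    have hk' : k < m := by omega
    have hcard := ih (le_of_lt hk')
    have hne : (st u π k).1.Nonempty := by
      rw [← Finset.card_pos, hcard]; omega
    obtain ⟨x, hx, hfav, -⟩ := favorite_spec (u (π.getD k d)) _ hne
    rw [st_succ u π d (by omega : k < π.length), pickStep, hfav]
    simp [Finset.card_erase_of_mem hx, hcard]
    omega

include hπ d d' in
lemma pick_spec {k : ℕ} (hk : k < m) :
    pk u π d d' k ∈ (st u π k).1 ∧
    (∀ y ∈ (st u π k).1, u (π.getD k d) y ≤ u (π.getD k d) (pk u π d d' k)) ∧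
    st u π (k+1) = ((st u π k).1.erase (pk u π d d' k),
      Function.update (st u π k).2 (π.getD k d)
        (insert (pk u π d d' k) ((st u π k).2 (π.getD k d)))) := by
  have hne : (st u π k).1.Nonempty := by
    rw [← Finset.card_pos, pool_card u π d d' hπ k (le_of_lt hk)]; omega
  obtain ⟨x, hx, hfav, hmax⟩ := favorite_spec (u (π.getD k d)) _ hne
  have hpk : pk u π d d' k = x := by rw [pk, hfav]; rfl
  refine ⟨hpk ▸ hx, hpk ▸ hmax, ?_⟩
  rw [st_succ u π d (by omega : k < π.length), pickStep, hfav, hpk]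

include d in
lemma pool_succ_subset (k : ℕ) : (st u π (k+1)).1 ⊆ (st u π k).1 := by
  rcases lt_or_ge k π.length with hk | hk
  · rw [st_succ u π d hk, pickStep]
    cases favorite (u (π.getD k d)) (st u π k).1 with
    | none => exact Finset.Subset.refl _
    | some j => exact Finset.erase_subset _ _
  · rw [st_succ_ge u π hk]

include d in
lemma pool_anti {k k' : ℕ} (h : k ≤ k') : (st u π k').1 ⊆ (st u π k).1 := by
  induction k' with
  | zero =>
    rw [Nat.le_zero.mp h]
  | succ k' ih =>
    rcases Nat.lt_or_ge k (k'+1) with h' | h'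
    · exact Finset.Subset.trans (pool_succ_subset u π d k') (ih (by omega))
    · have : k = k' + 1 := by omega
      rw [this]

include hπ d d' in
lemma pick_not_mem_next {k : ℕ} (hk : k < m) : pk u π d d' k ∉ (st u π (k+1)).1 := by
  rw [(pick_spec u π d d' hπ hk).2.2]
  exact Finset.notMem_erase _ _

include hπ d d' in
lemma pick_mem_pool {k k' : ℕ} (h : k ≤ k') (hk' : k' < m) :
    pk u π d d' k' ∈ (st u π k).1 :=
  pool_anti u π d h (pick_spec u π d d' hπ hk').1

include hπ d d' in
lemma pick_inj {k k' : ℕ} (h : k < k') (hk' : k' < m) :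
    pk u π d d' k ≠ pk u π d d' k' := by
  intro heq
  exact pick_not_mem_next u π d d' hπ (lt_trans h hk')
    (heq ▸ pick_mem_pool u π d d' hπ h hk')

include hπ d d' in
lemma sets_eq : ∀ k ≤ m, ∀ a : Fin n,
    (st u π k).2 a = ((Finset.range k).filter (fun t => π.getD t d = a)).image (pk u π d d') := by
  intro k
  induction k with
  | zero => intro _ a; simp [st_zero]
  | succ k ih =>
    intro hk a
    have hk' : k < m := by omega
    rw [(pick_spec u π d d' hπ hk').2.2]
    rw [Finset.range_add_one, Finset.filter_insert]
    by_cases ha : π.getD k d = a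
    · rw [if_pos ha, Finset.image_insert, ← ih (by omega) a, ← ha]
      simp
    · rw [if_neg ha, ← ih (by omega) a]
      simp only [Function.update_apply]
      rw [if_neg (fun h => ha (by rw [h]))]

include hπ d in
lemma count_eq : ∀ k ≤ m, ∀ a : Fin n,
    (π.take k).count a = ((Finset.range k).filter (fun t => π.getD t d = a)).card := by
  intro k
  induction k with
  | zero => intro _ a; simp
  | succ k ih =>
    intro hk a
    have hk' : k < π.length := by omega
    rw [List.take_succ, List.getElem?_eq_getElem hk', Option.toList_some,
      List.count_append, Finset.range_add_one, Finset.filter_insert]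
    by_cases ha : π.getD k d = a
    · rw [if_pos ha, Finset.card_insert_of_notMem (by simp)]
      have : π[k] = a := by rw [← List.getD_eq_getElem π d hk']; exact ha
      simp [this, ih (by omega) a, List.count_singleton]
    · rw [if_neg ha]
      have : ¬ (π[k] = a) := by rw [← List.getD_eq_getElem π d hk']; exact ha
      simp [List.count_singleton, this, ih (by omega) a]

include hπ d d' in
lemma pick_greedy {k k' : ℕ} (h : k ≤ k') (hk' : k' < m) :
    u (π.getD k d) (pk u π d d' k') ≤ u (π.getD k d) (pk u π d d' k) :=
  (pick_spec u π d d' hπ (lt_of_le_of_lt h hk')).2.1 _ (pick_mem_pool u π d d' hπ h hk')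

include hπ d d' in
lemma allocate_eq (a : Fin n) :
    allocate u π a = ((Finset.range m).filter (fun t => π.getD t d = a)).image (pk u π d d') := by
  have h2 : List.take m π = π := by rw [← hπ, List.take_length]
  have : allocate u π a = (st u π m).2 a := by
    unfold allocate st
    rw [h2]
  rw [this, sets_eq u π d d' hπ m (le_refl m) a]

end AD
lemma fin_filter_lt_card (T : ℕ) (ℓ : Fin T) :
    (Finset.univ.filter (fun r : Fin T => r < ℓ)).card = ℓ := by
  have h1 : ((Finset.univ.filter (fun r : Fin T => r < ℓ)).image Fin.val) =
      (Finset.range T).filter (· < (ℓ : ℕ)) := by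
    ext x
    simp only [mem_image, mem_filter, mem_univ, true_and, mem_range, Fin.lt_iff_val_lt_val]
    constructor
    · rintro ⟨r, hr, rfl⟩; exact ⟨r.2, hr⟩
    · rintro ⟨hx, hlt⟩; exact ⟨⟨x, hx⟩, hlt, rfl⟩
  have h2 := Finset.card_image_of_injective (Finset.univ.filter (fun r : Fin T => r < ℓ)) Fin.val_injective
  rw [h1] at h2
  rw [← h2]
  have h3 : (Finset.range T).filter (· < (ℓ : ℕ)) = Finset.range ℓ := by
    ext x; simp only [mem_filter, mem_range]
    exact ⟨fun h => h.2, fun h => ⟨lt_of_lt_of_le h (le_of_lt ℓ.2), h⟩⟩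
  rw [h3, Finset.card_range]

lemma rank_lemma (S : Finset ℕ) (T : ℕ) (h : S.card = T) (ℓ : Fin T) :
    (S.filter (fun x => x < (S.orderIsoOfFin h ℓ : ℕ))).card = ℓ := by
  set e := S.orderIsoOfFin h with he
  have himg : S.filter (fun x => x < (e ℓ : ℕ)) =
      (Finset.univ.filter (fun r : Fin T => r < ℓ)).image (fun r => (e r : ℕ)) := by
    ext x
    simp only [mem_filter, mem_image, mem_univ, true_and]
    constructor
    · rintro ⟨hx, hlt⟩
      refine ⟨e.symm ⟨x, hx⟩, ?_, by simp⟩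
      rw [← e.lt_iff_lt]
      have hval : ((e (e.symm ⟨x, hx⟩)) : ℕ) = x := by simp
      exact Subtype.coe_lt_coe.mp (by rw [hval] at *; exact (by simpa [hval] using hlt))
    · rintro ⟨r, hr, rfl⟩
      refine ⟨(e r).2, ?_⟩
      exact Subtype.coe_lt_coe.mpr (e.lt_iff_lt.mpr hr)
  rw [himg, Finset.card_image_of_injective _
    (fun x y hxy => e.injective (Subtype.val_injective hxy)), fin_filter_lt_card]

lemma orderIso_mono (S : Finset ℕ) (T : ℕ) (h : S.card = T) {r r' : Fin T} (hrr : r ≤ r') :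
    (S.orderIsoOfFin h r : ℕ) ≤ (S.orderIsoOfFin h r' : ℕ) :=
  Subtype.coe_le_coe.mpr ((S.orderIsoOfFin h).le_iff_le.mpr hrr)

lemma abel_lemma (C : ℝ) (hC : 0 ≤ C) (v : ℕ → ℝ) (hva : Antitone v) (hv0 : ∀ k, 0 ≤ v k)
    (a : ℕ → ℕ) (ha0 : a 0 = 0) :
    ∀ R : ℕ, (∀ r r', r ≤ r' → r' ≤ R → a r ≤ a r') → (∀ r ≤ R, (r : ℝ) ≤ C * a r) →
    ∑ r ∈ Ico 1 (R+1), v (a r) ≤ C * ∑ ℓ ∈ Ico 1 (a R + 1), v ℓ - (C * a R - R) * v (a R) := by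
  intro R
  induction R with
  | zero =>
    intro _ _
    simp [ha0]
  | succ R ih =>
    intro hmono hbound
    have ih' := ih (fun r r' h1 h2 => hmono r r' h1 (by omega)) (fun r hr => hbound r (by omega))
    have hAA : a R ≤ a (R+1) := hmono R (R+1) (by omega) (le_refl _)
    have hsum1 : ∑ r ∈ Ico 1 (R+1+1), v (a r) = (∑ r ∈ Ico 1 (R+1), v (a r)) + v (a (R+1)) :=
      Finset.sum_Ico_succ_top (by omega) _
    have hsplit : C * ∑ ℓ ∈ Ico 1 (a (R+1) + 1), v ℓ =
        C * ∑ ℓ ∈ Ico 1 (a R + 1), v ℓ + C * ∑ ℓ ∈ Ico (a R + 1) (a (R+1) + 1), v ℓ := by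
      rw [← Finset.sum_Ico_consecutive v (by omega : 1 ≤ a R + 1) (by omega : a R + 1 ≤ a (R+1) + 1)]
      ring
    have hblock : ((a (R+1) - a R : ℕ) : ℝ) * v (a (R+1)) ≤ ∑ ℓ ∈ Ico (a R + 1) (a (R+1) + 1), v ℓ := by
      have := Finset.card_nsmul_le_sum (Ico (a R + 1) (a (R+1) + 1)) v (v (a (R+1)))
        (fun x hx => hva (by rw [Finset.mem_Ico] at hx; omega))
      rwa [Nat.card_Ico, nsmul_eq_mul, show a (R+1) + 1 - (a R + 1) = a (R+1) - a R from by omega] at this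
    have hblock' : C * (((a (R+1) - a R : ℕ) : ℝ) * v (a (R+1))) ≤
        C * ∑ ℓ ∈ Ico (a R + 1) (a (R+1) + 1), v ℓ := by
      exact mul_le_mul_of_nonneg_left hblock hC
    have hvv : v (a (R+1)) ≤ v (a R) := hva hAA
    have hpos : (0:ℝ) ≤ C * a R - R := by
      have := hbound R (by omega); linarith
    have hmul : (C * a R - R) * v (a (R+1)) ≤ (C * a R - R) * v (a R) :=
      mul_le_mul_of_nonneg_left hvv hpos
    have hcast : ((a (R+1) - a R : ℕ) : ℝ) = (a (R+1) : ℝ) - a R := by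
      push_cast [Nat.cast_sub hAA]; ring
    rw [hsum1, hsplit]
    rw [hcast] at hblock'
    push_cast
    nlinarith [hblock', ih', hmul]

lemma backward {n m : ℕ} (f : ℕ → ℝ) (hfid : ∀ t : ℕ, f t = t)
    (w : Fin n → ℝ) (hw : ∀ i, 0 < w i) (π : List (Fin n)) (hπ : π.length = m)
    (hseq : IsDivisorSeq f w π) (u : Fin n → Fin m → ℝ) (hu : ∀ i j, 0 ≤ u i j) :
    isWEF1 w u (allocate u π) := by
  intro i j
  rcases Nat.eq_zero_or_pos m with hm | hm
  · -- no items
    subst hm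
    have hnil : π = [] := List.eq_nil_of_length_eq_zero hπ
    subst hnil
    refine ⟨∅, Finset.empty_subset _, by simp, ?_⟩
    have : allocate u ([] : List (Fin n)) = fun _ => (∅ : Finset (Fin 0)) := rfl
    rw [this]
    simp
  · -- main case
    have hlen0 : 0 < π.length := by omega
    set d : Fin n := π.get ⟨0, hlen0⟩ with hd
    set d' : Fin m := ⟨0, hm⟩ with hd'
    set PK : ℕ → Fin m := AD.pk u π d d' with hPK
    set S : Fin n → Finset ℕ := fun a => (Finset.range m).filter (fun t => π.getD t d = a)
      with hS
    set cnt : Fin n → ℕ → ℕ :=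
      fun a t => ((Finset.range t).filter (fun t' => π.getD t' d = a)).card with hcnt
    -- basic facts about S and cnt
    have hSmem : ∀ a t, t ∈ S a ↔ (t < m ∧ π.getD t d = a) := by
      intro a t; rw [hS]; simp [Finset.mem_filter, Finset.mem_range]
    have hcnt_filter : ∀ a t, t ≤ m → cnt a t = ((S a).filter (fun x => x < t)).card := by
      intro a t ht
      rw [hcnt, hS]
      apply congrArg Finset.card
      ext x
      simp only [Finset.mem_filter, Finset.mem_range]
      constructor
      · rintro ⟨h1, h2⟩; exact ⟨⟨by omega, h2⟩, h1⟩
      · rintro ⟨⟨h1, h2⟩, h3⟩; exact ⟨h3, h2⟩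
    have hcnt_count : ∀ a (t : ℕ), t ≤ m → (π.take t).count a = cnt a t := by
      intro a t ht
      exact AD.count_eq π d hπ t ht a
    have hcnt_mono : ∀ a {t t' : ℕ}, t ≤ t' → cnt a t ≤ cnt a t' := by
      intro a t t' htt
      apply Finset.card_le_card
      intro x hx
      rw [Finset.mem_filter] at hx ⊢
      exact ⟨Finset.mem_range.mpr
        (by have := Finset.mem_range.mp hx.1; omega), hx.2⟩
    have hcnt_le : ∀ a t, t ≤ m → cnt a t ≤ (S a).card := by
      intro a t ht
      rw [hcnt_filter a t ht]
      exact Finset.card_le_card (Finset.filter_subset _ _)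
    -- allocation description
    have hMa : ∀ a, allocate u π a = (S a).image PK := fun a => AD.allocate_eq u π d d' hπ a
    -- sums over allocation
    have hinj : ∀ a, ∀ x ∈ S a, ∀ y ∈ S a, PK x = PK y → x = y := by
      intro a x hx y hy hxy
      rw [hSmem] at hx hy
      rcases Nat.lt_trichotomy x y with h | h | h
      · exact absurd hxy (AD.pick_inj u π d d' hπ h hy.1)
      · exact h
      · exact absurd hxy.symm (AD.pick_inj u π d d' hπ h hx.1)
    have hsumM : ∀ a (g : Fin m → ℝ), ∑ x ∈ allocate u π a, g x = ∑ t ∈ S a, g (PK t) := by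
      intro a g
      rw [hMa a]
      exact Finset.sum_image (hinj a)
    -- nonneg of weights
    have hwi := hw i
    have hwj := hw j
    -- s and T
    set Sj := S j with hSj
    set Si := S i with hSi
    set s := Sj.card with hs
    set T := Si.card with hT
    rcases Nat.eq_zero_or_pos s with hs0 | hs1
    · -- j got nothing
      refine ⟨∅, Finset.empty_subset _, by simp, ?_⟩
      have hSjE : Sj = ∅ := Finset.card_eq_zero.mp hs0
      have h1 : allocate u π j = ∅ := by rw [hMa j, ← hSj, hSjE]; simp
      rw [h1]
      simp only [Finset.sdiff_empty, Finset.sum_empty, Finset.empty_sdiff]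
      rw [zero_div]
      exact div_nonneg (Finset.sum_nonneg (fun x _ => hu i x)) (le_of_lt hwi)
    · -- main case: j picked at least once
      set C : ℝ := w j / w i with hC
      have hCpos : 0 < C := div_pos hwj hwi
      set eJ : ℕ → ℕ := fun r => if hr : r < s then ((Sj.orderIsoOfFin hs.symm) ⟨r, hr⟩ : ℕ) else m with heJ
      set eI : ℕ → ℕ := fun r => if hr : r < T then ((Si.orderIsoOfFin hT.symm) ⟨r, hr⟩ : ℕ) else m with heI
      set v : ℕ → ℝ := fun ℓ => if hℓ : ℓ - 1 < T then u i (PK (eI (ℓ - 1))) else 0 with hv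
      set A : ℕ → ℕ := fun r => if r = 0 then 0 else cnt i (eJ r) with hA
      have heJmem : ∀ r, r < s → eJ r ∈ Sj := by
        intro r hr
        rw [heJ]; simp only [dif_pos hr]
        exact ((Sj.orderIsoOfFin hs.symm) ⟨r, hr⟩).2
      have heImem : ∀ r, r < T → eI r ∈ Si := by
        intro r hr
        rw [heI]; simp only [dif_pos hr]
        exact ((Si.orderIsoOfFin hT.symm) ⟨r, hr⟩).2
      have heJlt : ∀ r, r < s → eJ r < m ∧ π.getD (eJ r) d = j := by
        intro r hr; exact (hSmem j (eJ r)).mp (heJmem r hr)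
      have heIlt : ∀ r, r < T → eI r < m ∧ π.getD (eI r) d = i := by
        intro r hr; exact (hSmem i (eI r)).mp (heImem r hr)
      have heJmono : ∀ r r', r ≤ r' → r' < s → eJ r ≤ eJ r' := by
        intro r r' h1 h2
        rw [heJ]; simp only [dif_pos h2, dif_pos (lt_of_le_of_lt h1 h2)]
        exact orderIso_mono Sj s hs.symm h1
      have heImono : ∀ r r', r ≤ r' → r' < T → eI r ≤ eI r' := by
        intro r r' h1 h2
        rw [heI]; simp only [dif_pos h2, dif_pos (lt_of_le_of_lt h1 h2)]
        exact orderIso_mono Si T hT.symm h1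
      have hrankJ : ∀ r, (hr : r < s) → cnt j (eJ r) = r := by
        intro r hr
        rw [hcnt_filter j _ (le_of_lt (heJlt r hr).1)]
        have := rank_lemma Sj s hs.symm ⟨r, hr⟩
        rw [heJ]; simp only [dif_pos hr]
        exact this
      have hrankI : ∀ r, (hr : r < T) → cnt i (eI r) = r := by
        intro r hr
        rw [hcnt_filter i _ (le_of_lt (heIlt r hr).1)]
        have := rank_lemma Si T hT.symm ⟨r, hr⟩
        rw [heI]; simp only [dif_pos hr]
        exact this
      have hv0 : ∀ ℓ, 0 ≤ v ℓ := by
        intro ℓ; rw [hv]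
        by_cases hℓ : ℓ - 1 < T
        · simp only [dif_pos hℓ]; exact hu i _
        · simp only [dif_neg hℓ]; exact le_refl 0
      have hvanti : Antitone v := by
        intro k l hkl
        by_cases hl : l - 1 < T
        · have hk : k - 1 < T := by omega
          rw [hv]; simp only [dif_pos hl, dif_pos hk]
          have h1 : eI (k - 1) ≤ eI (l - 1) := heImono _ _ (by omega) hl
          have h2 : eI (l - 1) < m := (heIlt _ hl).1
          have h3 : π.getD (eI (k - 1)) d = i := (heIlt _ hk).2
          have hg := AD.pick_greedy u π d d' hπ h1 h2
          rw [h3] at hg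
          exact hg
        · have : v l = 0 := by rw [hv]; simp only [dif_neg hl]
          rw [this]; exact hv0 k
      have hC2 : ∀ k, k ∈ Sj → 1 ≤ cnt i k → u i (PK k) ≤ v (cnt i k) := by
        intro k hk h1
        have hkm : k < m := ((hSmem j k).mp hk).1
        have hle : cnt i k ≤ T := hcnt_le i k (le_of_lt hkm)
        have hTlt : cnt i k - 1 < T := by omega
        have hstep : eI (cnt i k - 1) < k := by
          by_contra hcon
          push_neg at hcon
          have h5 := hcnt_mono i hcon
          rw [hrankI _ hTlt] at h5
          omega
        have h3 : π.getD (eI (cnt i k - 1)) d = i := (heIlt _ hTlt).2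
        have hg := AD.pick_greedy u π d d' hπ (le_of_lt hstep) hkm
        rw [h3] at hg
        have : v (cnt i k) = u i (PK (eI (cnt i k - 1))) := by
          rw [hv]; simp only [dif_pos hTlt]
        rw [this]
        exact hg
      have hdiv : ∀ r, 1 ≤ r → r < s → (r : ℝ) ≤ C * cnt i (eJ r) ∧ 1 ≤ cnt i (eJ r) := by
        intro r h1 h2
        have hkm : eJ r < m := (heJlt r h2).1
        have hklen : eJ r < π.length := by omega
        have hget : π.get ⟨eJ r, hklen⟩ = j := by
          have hh := (heJlt r h2).2
          rwa [List.getD_eq_getElem π d hklen] at hh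
        have hmain := (hseq (eJ r) hklen i).1
        rw [hget, hcnt_count j _ (le_of_lt hkm), hcnt_count i _ (le_of_lt hkm),
          hrankJ r h2, hfid, hfid] at hmain
        have hcnt1 : 1 ≤ cnt i (eJ r) := by
          by_contra hc
          push_neg at hc
          have h0 : cnt i (eJ r) = 0 := by omega
          rw [h0] at hmain
          have hlt : (0 : ℝ) < (r : ℝ) / w j := by
            apply div_pos _ hwj
            exact_mod_cast h1
          norm_num at hmain
          linarith
        refine ⟨?_, hcnt1⟩
        rw [div_le_div_iff₀ hwj hwi] at hmain
        rw [hC]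
        rw [div_mul_eq_mul_div, le_div_iff₀ hwi]
        linarith
      have hAmono : ∀ r r', r ≤ r' → r' ≤ s - 1 → A r ≤ A r' := by
        intro r r' h1 h2
        by_cases hr : r = 0
        · rw [hA]; simp only [if_pos hr]; exact Nat.zero_le _
        · have hr' : r' ≠ 0 := by omega
          rw [hA]; simp only [if_neg hr, if_neg hr']
          exact hcnt_mono i (heJmono r r' h1 (by omega))
      have hAbound : ∀ r, r ≤ s - 1 → (r : ℝ) ≤ C * A r := by
        intro r hr
        by_cases hr0 : r = 0
        · subst hr0; rw [hA]; simp
        · have h1 : 1 ≤ r := by omega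
          have h2 : r < s := by omega
          rw [hA]; simp only [if_neg hr0]
          exact (hdiv r h1 h2).1
      have habel := abel_lemma C (le_of_lt hCpos) v hvanti hv0 A
        (by rw [hA]; simp) (s - 1) hAmono hAbound
      rw [show s - 1 + 1 = s from by omega] at habel
      -- B is the first item j picked
      refine ⟨{PK (eJ 0)}, ?_, by simp, ?_⟩
      · rw [hMa j]
        simp only [Finset.singleton_subset_iff]
        exact Finset.mem_image_of_mem PK (heJmem 0 hs1)
      -- injectivity of eJ / eI and image facts
      have hSjim : Sj = (Finset.range s).image eJ := by
        ext t
        simp only [Finset.mem_image, Finset.mem_range]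
        constructor
        · intro ht
          refine ⟨((Sj.orderIsoOfFin hs.symm).symm ⟨t, ht⟩ : Fin s), ((Sj.orderIsoOfFin hs.symm).symm ⟨t, ht⟩).2, ?_⟩
          rw [heJ]
          simp only [dif_pos ((Sj.orderIsoOfFin hs.symm).symm ⟨t, ht⟩).2]
          rw [show (⟨((Sj.orderIsoOfFin hs.symm).symm ⟨t, ht⟩ : Fin s), ((Sj.orderIsoOfFin hs.symm).symm ⟨t, ht⟩).2⟩ : Fin s) = (Sj.orderIsoOfFin hs.symm).symm ⟨t, ht⟩ from rfl]
          rw [OrderIso.apply_symm_apply]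
        · rintro ⟨r, hr, rfl⟩
          exact heJmem r hr
      have hSiim : Si = (Finset.range T).image eI := by
        ext t
        simp only [Finset.mem_image, Finset.mem_range]
        constructor
        · intro ht
          refine ⟨((Si.orderIsoOfFin hT.symm).symm ⟨t, ht⟩ : Fin T), ((Si.orderIsoOfFin hT.symm).symm ⟨t, ht⟩).2, ?_⟩
          rw [heI]
          simp only [dif_pos ((Si.orderIsoOfFin hT.symm).symm ⟨t, ht⟩).2]
          rw [show (⟨((Si.orderIsoOfFin hT.symm).symm ⟨t, ht⟩ : Fin T), ((Si.orderIsoOfFin hT.symm).symm ⟨t, ht⟩).2⟩ : Fin T) = (Si.orderIsoOfFin hT.symm).symm ⟨t, ht⟩ from rfl]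
          rw [OrderIso.apply_symm_apply]
        · rintro ⟨r, hr, rfl⟩
          exact heImem r hr
      have heJinj : ∀ x ∈ Finset.range s, ∀ y ∈ Finset.range s, eJ x = eJ y → x = y := by
        intro x hx y hy hxy
        rw [Finset.mem_range] at hx hy
        rw [heJ] at hxy
        simp only [dif_pos hx, dif_pos hy] at hxy
        have := (Sj.orderIsoOfFin hs.symm).injective (Subtype.val_injective hxy)
        exact congrArg Fin.val this
      have heIinj : ∀ x ∈ Finset.range T, ∀ y ∈ Finset.range T, eI x = eI y → x = y := by
        intro x hx y hy hxy
        rw [Finset.mem_range] at hx hy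
        rw [heI] at hxy
        simp only [dif_pos hx, dif_pos hy] at hxy
        have := (Si.orderIsoOfFin hT.symm).injective (Subtype.val_injective hxy)
        exact congrArg Fin.val this
      -- the sum over M j minus B
      have hsumJ : ∑ x ∈ allocate u π j \ {PK (eJ 0)}, u i x
          = ∑ r ∈ Ico 1 s, u i (PK (eJ r)) := by
        have hBsub : {PK (eJ 0)} ⊆ allocate u π j := by
          rw [hMa j]
          simp only [Finset.singleton_subset_iff]
          exact Finset.mem_image_of_mem PK (heJmem 0 hs1)
        rw [Finset.sum_sdiff_eq_sub hBsub, Finset.sum_singleton, hsumM j (u i)]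
        have h6 : ∑ t ∈ Sj, u i (PK t) = ∑ r ∈ Finset.range s, u i (PK (eJ r)) := by
          conv_lhs => rw [hSjim]
          exact Finset.sum_image heJinj
        rw [h6, Finset.range_eq_Ico, Finset.sum_eq_sum_Ico_succ_bot hs1]
        ring
      have hstep1 : ∑ r ∈ Ico 1 s, u i (PK (eJ r)) ≤ ∑ r ∈ Ico 1 s, v (A r) := by
        apply Finset.sum_le_sum
        intro r hr
        rw [Finset.mem_Ico] at hr
        have hAr : A r = cnt i (eJ r) := by
          rw [hA]; simp only [if_neg (by omega : ¬ r = 0)]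
        rw [hAr]
        exact hC2 (eJ r) (heJmem r hr.2) (hdiv r hr.1 hr.2).2
      have hATle : A (s - 1) ≤ T := by
        by_cases h0 : s - 1 = 0
        · rw [h0, hA]; simp
        · rw [hA]; simp only [if_neg h0]
          exact hcnt_le i (eJ (s - 1)) (le_of_lt (heJlt (s - 1) (by omega)).1)
      have habel2 : ∑ r ∈ Ico 1 s, v (A r) ≤ C * ∑ ℓ ∈ Ico 1 (T + 1), v ℓ := by
        have hb := hAbound (s - 1) (le_refl _)
        have hterm : (0:ℝ) ≤ (C * ↑(A (s - 1)) - ↑(s - 1)) * v (A (s - 1)) :=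
          mul_nonneg (by linarith) (hv0 _)
        have hsub : C * ∑ ℓ ∈ Ico 1 (A (s - 1) + 1), v ℓ ≤ C * ∑ ℓ ∈ Ico 1 (T + 1), v ℓ := by
          apply mul_le_mul_of_nonneg_left _ (le_of_lt hCpos)
          apply Finset.sum_le_sum_of_subset_of_nonneg
          · exact Finset.Ico_subset_Ico (le_refl 1) (by omega)
          · intro ℓ _ _; exact hv0 ℓ
        exact le_trans habel (le_trans (sub_le_self _ hterm) hsub)
      have hMi : ∑ ℓ ∈ Ico 1 (T + 1), v ℓ = ∑ x ∈ allocate u π i, u i x := by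
        rw [hsumM i (u i), Finset.sum_Ico_eq_sum_range,
          show T + 1 - 1 = T from rfl]
        have h7 : ∑ t ∈ Si, u i (PK t) = ∑ r ∈ Finset.range T, u i (PK (eI r)) := by
          conv_lhs => rw [hSiim]
          exact Finset.sum_image heIinj
        rw [h7]
        apply Finset.sum_congr rfl
        intro r hr
        rw [Finset.mem_range] at hr
        rw [hv]
        simp only [show 1 + r - 1 = r from by omega, dif_pos hr]
      rw [hsumJ]
      have hfinal : ∑ r ∈ Ico 1 s, u i (PK (eJ r)) ≤ C * ∑ x ∈ allocate u π i, u i x := by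
        rw [← hMi]; exact le_trans hstep1 habel2
      rw [div_le_div_iff₀ hwj hwi]
      calc (∑ r ∈ Ico 1 s, u i (PK (eJ r))) * w i
          ≤ (C * ∑ x ∈ allocate u π i, u i x) * w i :=
            mul_le_mul_of_nonneg_right hfinal (le_of_lt hwi)
        _ = (∑ x ∈ allocate u π i, u i x) * w j := by
            rw [hC]
            field_simp

open scoped Classical in
noncomputable def gpick2 (f : ℕ → ℝ) (W : ℝ) (c0 c1 : ℕ) : Fin 2 :=
  if f c0 ≤ f c1 / W then 0 else 1

noncomputable def gseq (f : ℕ → ℝ) (W : ℝ) : ℕ → List (Fin 2)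
  | 0 => []
  | k + 1 => gseq f W k ++ [gpick2 f W ((gseq f W k).count 0) ((gseq f W k).count 1)]

lemma gseq_length (f : ℕ → ℝ) (W : ℝ) : ∀ k, (gseq f W k).length = k := by
  intro k
  induction k with
  | zero => rfl
  | succ k ih => simp [gseq, ih]

lemma gseq_take (f : ℕ → ℝ) (W : ℝ) : ∀ {k K}, k ≤ K → (gseq f W K).take k = gseq f W k := by
  intro k K
  induction K with
  | zero => intro h; interval_cases k; rfl
  | succ K ih =>
    intro h
    rcases Nat.lt_or_ge k (K + 1) with h' | h'
    · rw [gseq, List.take_append_of_le_length (by rw [gseq_length]; omega)]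
      exact ih (by omega)
    · have : k = K + 1 := by omega
      subst this
      exact List.take_of_length_le (by rw [gseq_length])

lemma gseq_get (f : ℕ → ℝ) (W : ℝ) {k K : ℕ} (hk : k < K) (h : k < (gseq f W K).length) :
    (gseq f W K).get ⟨k, h⟩ =
      gpick2 f W ((gseq f W k).count 0) ((gseq f W k).count 1) := by
  have hKeq : gseq f W K = (gseq f W k ++
      [gpick2 f W ((gseq f W k).count 0) ((gseq f W k).count 1)]) ++ (gseq f W K).drop (k+1) := by
    have h4 := List.take_append_drop (k+1) (gseq f W K)
    rw [gseq_take f W (by omega : k + 1 ≤ K)] at h4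
    conv_lhs => rw [← h4]
    rw [gseq]
  rw [List.get_eq_getElem, List.getElem_of_eq hKeq,
    List.getElem_append_left (by simp [gseq_length])]
  exact List.getElem_concat_length (gseq_length f W k).symm
    (by simp [gseq_length])

lemma count2 (l : List (Fin 2)) : l.count 0 + l.count 1 = l.length := by
  induction l with
  | nil => rfl
  | cons a l ih =>
    fin_cases a <;> simp [List.count_cons] <;> omega

lemma allocate_card {n m : ℕ} (u : Fin n → Fin m → ℝ) (π : List (Fin n)) (d : Fin n)
    (d' : Fin m) (hπ : π.length = m) (a : Fin n) :
    (allocate u π a).card = π.count a := by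
  rw [AD.allocate_eq u π d d' hπ a]
  have h2 : List.take m π = π := by rw [← hπ, List.take_length]
  have h3 := AD.count_eq π d hπ m (le_refl m) a
  rw [h2] at h3
  rw [h3]
  apply Finset.card_image_of_injOn
  intro x hx y hy hxy
  simp only [Finset.coe_filter, Set.mem_setOf_eq, Finset.mem_range] at hx hy
  rcases Nat.lt_trichotomy x y with h | h | h
  · exact absurd hxy (AD.pick_inj u π d d' hπ h hy.1)
  · exact h
  · exact absurd hxy.symm (AD.pick_inj u π d d' hπ h hx.1)

lemma fin2_eq_one_of_ne_zero (x : Fin 2) (h : x ≠ 0) : x = 1 := by omega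

lemma forward_cex (f : ℕ → ℝ) (hf : IsDivisorFn f) (t0 : ℕ) (ht0 : f t0 ≠ t0)
    (H : ∀ (n m : ℕ) (w : Fin n → ℝ), (∀ i, 0 < w i) →
      ∀ π : List (Fin n), π.length = m → IsDivisorSeq f w π →
      ∀ u : Fin n → Fin m → ℝ, (∀ i j, 0 ≤ u i j) →
        isWEF1 w u (allocate u π)) : False := by
  have hft0 : (t0 : ℝ) < f t0 := lt_of_le_of_ne (hf.2 t0).1 (Ne.symm ht0)
  obtain ⟨ε, hεpos, hεdef⟩ : ∃ ε : ℝ, 0 < ε ∧ f t0 = (t0:ℝ) + ε :=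
    ⟨f t0 - t0, by linarith, by ring⟩
  obtain ⟨W, hWpos, hWε⟩ : ∃ W : ℝ, 0 < W ∧ W * ε = (t0:ℝ) + 4 :=
    ⟨((t0:ℝ)+4)/ε, div_pos (by positivity) hεpos, by field_simp⟩
  set b : ℕ := Nat.floor (W * t0) + 2 with hb
  have hbub : (b : ℝ) ≤ W * t0 + 2 := by
    rw [hb]; push_cast
    have := Nat.floor_le (by positivity : (0 : ℝ) ≤ W * t0); linarith
  have hblb : W * t0 + 1 < b := by
    rw [hb]; push_cast
    have := Nat.lt_floor_add_one (W * (t0 : ℝ)); linarith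
  set m : ℕ := t0 + b with hm
  set w : Fin 2 → ℝ := ![1, W] with hw
  have hw0 : w 0 = 1 := rfl
  have hw1 : w 1 = W := rfl
  have hwpos : ∀ i, 0 < w i := by
    intro i
    fin_cases i
    · rw [show w ⟨0, by omega⟩ = w 0 from rfl, hw0]; norm_num
    · rw [show w ⟨1, by omega⟩ = w 1 from rfl, hw1]; exact hWpos
  have hlen : (gseq f W m).length = m := gseq_length f W m
  have hcount01 : ∀ k, (gseq f W k).count 0 + (gseq f W k).count 1 = k :=
    fun k => (count2 _).trans (gseq_length f W k)
  -- agent 0 never picks more than t0 items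
  have hc0 : ∀ k, k ≤ m → (gseq f W k).count 0 ≤ t0 := by
    intro k
    induction k with
    | zero => intro _; simp [gseq]
    | succ k ih =>
      intro hk
      have ihk := ih (by omega)
      rw [gseq, List.count_append]
      by_cases hp : gpick2 f W ((gseq f W k).count 0) ((gseq f W k).count 1) = 0
      · rw [hp, show List.count (0 : Fin 2) [0] = 1 from by decide]
        have hcond : f ((gseq f W k).count 0) ≤ f ((gseq f W k).count 1) / W := by
          by_contra hc
          rw [gpick2, if_neg hc] at hp
          exact absurd hp (by decide)
        by_contra hcon
        have hceq : (gseq f W k).count 0 = t0 := by omega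
        rw [hceq] at hcond
        rw [le_div_iff₀ hWpos] at hcond
        have hc1le : (gseq f W k).count 1 ≤ k := by have := hcount01 k; omega
        have hfc1 : f ((gseq f W k).count 1) ≤ ((gseq f W k).count 1 : ℝ) + 1 := (hf.2 _).2
        have hcast : ((gseq f W k).count 1 : ℝ) ≤ (k : ℝ) := by exact_mod_cast hc1le
        have hkm : (k : ℝ) + 1 ≤ (t0 : ℝ) + b := by
          have : k + 1 ≤ t0 + b := by omega
          exact_mod_cast this
        have hft0W : f t0 * W = W * t0 + ((t0:ℝ) + 4) := by
          rw [hεdef]; ring_nf; linarith [hWε]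
        linarith
      · have hp1 := fin2_eq_one_of_ne_zero _ hp
        rw [hp1, show List.count (0 : Fin 2) [1] = 0 from by decide]
        omega
  -- it is a divisor sequence
  have hseq : IsDivisorSeq f w (gseq f W m) := by
    intro k hk i
    have hkm : k < m := by rwa [hlen] at hk
    have hget := gseq_get f W hkm hk
    have htake : ∀ a : Fin 2, ((gseq f W m).take k).count a = (gseq f W k).count a := by
      intro a; rw [gseq_take f W (le_of_lt hkm)]
    by_cases hcond : f ((gseq f W k).count 0) ≤ f ((gseq f W k).count 1) / W
    · have hp : gpick2 f W ((gseq f W k).count 0) ((gseq f W k).count 1) = 0 := by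
        rw [gpick2, if_pos hcond]
      rw [hget, hp]
      simp only [htake]
      have hi01 : i = 0 ∨ i = 1 := by omega
      constructor
      · rcases hi01 with rfl | rfl
        · exact le_refl _
        · rw [hw0, hw1, div_one]
          exact hcond
      · intro hi
        exact absurd hi (by simp [Fin.lt_def])
    · have hp : gpick2 f W ((gseq f W k).count 0) ((gseq f W k).count 1) = 1 := by
        rw [gpick2, if_neg hcond]
      have hlt : f ((gseq f W k).count 1) / W < f ((gseq f W k).count 0) :=
        not_le.mp hcond
      rw [hget, hp]
      simp only [htake]
      have hi01 : i = 0 ∨ i = 1 := by omega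
      constructor
      · rcases hi01 with rfl | rfl
        · rw [hw0, hw1, div_one]
          linarith
        · exact le_refl _
      · intro hi
        have hi0 : i = 0 := by omega
        subst hi0
        rw [hw0, hw1, div_one]
        linarith
  -- apply the WEF1 hypothesis to the all-ones utilities
  have hm0 : 0 < m := by omega
  set u1 : Fin 2 → Fin m → ℝ := fun _ _ => 1 with hu1
  obtain ⟨B, hB, hBcard, hle⟩ :=
    H 2 m w hwpos (gseq f W m) hlen hseq u1 (fun _ _ => by rw [hu1]; norm_num) 0 1
  have hcard1 : (allocate u1 (gseq f W m) 1).card = (gseq f W m).count 1 :=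
    allocate_card _ _ 0 ⟨0, hm0⟩ hlen 1
  have hcard0 : (allocate u1 (gseq f W m) 0).card = (gseq f W m).count 0 :=
    allocate_card _ _ 0 ⟨0, hm0⟩ hlen 0
  have hc0m : (gseq f W m).count 0 ≤ t0 := hc0 m (le_refl m)
  have hc1m : b ≤ (gseq f W m).count 1 := by have := hcount01 m; omega
  simp only [hu1, Finset.sum_const, nsmul_eq_mul, mul_one] at hle
  rw [hw0, hw1, div_one, Finset.card_sdiff_of_subset hB] at hle
  rw [div_le_iff₀ hWpos] at hle
  have h1 : b - 1 ≤ (allocate u1 (gseq f W m) 1).card - B.card := by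
    rw [hcard1]; omega
  have h2 : ((allocate u1 (gseq f W m) 0).card : ℝ) ≤ t0 := by
    rw [hcard0]; exact_mod_cast hc0m
  have h3 : ((b - 1 : ℕ) : ℝ) ≤ (((allocate u1 (gseq f W m) 1).card - B.card : ℕ) : ℝ) := by
    exact_mod_cast h1
  have h4 : (b : ℝ) - 1 ≤ ((b - 1 : ℕ) : ℝ) := by
    rw [Nat.cast_sub (by omega : 1 ≤ b)]; norm_num
  have h5 : ((allocate u1 (gseq f W m) 0).card : ℝ) * W ≤ (t0 : ℝ) * W :=
    mul_le_mul_of_nonneg_right h2 (le_of_lt hWpos)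
  have hcomm : W * (t0 : ℝ) = (t0 : ℝ) * W := mul_comm _ _
  linarith [hblb, hle, h3, h4, h5, hcomm]


/-- Among all divisor methods, Adams' method (`f t = t`) is the only
one satisfying WEF1: a divisor method with function `f` produces a WEF1 allocation
for every instance if and only if `f t = t` for all `t`. -/
theorem adams_unique_WEF1 (f : ℕ → ℝ) (hf : IsDivisorFn f) :
    (∀ (n m : ℕ) (w : Fin n → ℝ), (∀ i, 0 < w i) →
      ∀ π : List (Fin n), π.length = m → IsDivisorSeq f w π →
      ∀ u : Fin n → Fin m → ℝ, (∀ i j, 0 ≤ u i j) →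
        isWEF1 w u (allocate u π)) ↔
      ∀ t : ℕ, f t = t := by
  constructor
  · intro H t
    by_contra hne
    exact forward_cex f hf t hne H
  · intro hfid n m w hw π hlen hseq u hu
    exact backward f hfid w hw π hlen hseq u hu
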